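/- Upper bound on the coverage probability of a random sensor network (Theorem 8). Fix n ≥ 1 and a radius r with 0 < r < 1/2. Then p_cov(n,r) ≤ [1 − (1 − πr²/4)^n]^4 · [1 − (1 − πr²/2)^n]^{4⌊(1−2r)/(2r)⌋} · [1 − (1 − πr²)^n]^{⌊(1−2r)/(2r)⌋²}, where ⌊x⌋ denotes the largest integer ≤ x. -/

import Mathlib

open MeasureTheory Metric Finset

noncomputable section

abbrev Pt : Type := EuclideanSpace ℝ (Fin 2)

def pt (x y : ℝ) : Pt := (WithLp.equiv 2 (Fin 2 → ℝ)).symm ![x, y]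

def S0 : Set Pt := {X | X 0 ∈ Set.Icc (-(1:ℝ)/2) (1/2) ∧ X 1 ∈ Set.Icc (-(1:ℝ)/2) (1/2)}

def gridPt (s : ℕ) (ij : Fin s × Fin s) : Pt :=
  pt (((ij.1 : ℝ) + 1/2) / s - 1/2) (((ij.2 : ℝ) + 1/2) / s - 1/2)

/-- The joint distribution of `n` nodes placed i.i.d. uniformly on `S₀`. -/
def μunif (n : ℕ) : Measure (Fin n → Pt) := Measure.pi fun _ => volume.restrict S0

/-- `ν(F)`: the area (Lebesgue measure) of `F ∩ S₀`. -/
def nu (F : Set Pt) : ℝ := (volume (F ∩ S0)).toReal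

/-- Coverage probability of the random network `g(n, r)`. -/
def pcovRand (n : ℕ) (r : ℝ) : ℝ :=
  (μunif n {ω | ∀ u ∈ S0, ∃ i, dist (ω i) u ≤ r}).toReal

/-- The Bernoulli(p) measure on Bool. -/
def bern (p : ℝ) : Measure Bool :=
  ENNReal.ofReal p • Measure.dirac true + ENNReal.ofReal (1 - p) • Measure.dirac false

/-- Sample space measure for `g(n, r, p)`: node positions are i.i.d. uniform on `S₀`,
and each unordered pair of nodes carries an independent Bernoulli(p) indicator. -/
def μgraph (n : ℕ) (p : ℝ) : Measure ((Fin n → Pt) × (Sym2 (Fin n) → Bool)) :=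
  (Measure.pi fun _ : Fin n => volume.restrict S0).prod
    (Measure.pi fun _ : Sym2 (Fin n) => bern p)

/-- Adjacency in `g(n, r, p)`: nodes `i ≠ j` are joined iff they are within distance `r`
and the pair's Bernoulli indicator equals `true`. -/
def adj (n : ℕ) (r : ℝ) (ω : (Fin n → Pt) × (Sym2 (Fin n) → Bool)) (i j : Fin n) : Prop :=
  i ≠ j ∧ dist (ω.1 i) (ω.1 j) ≤ r ∧ ω.2 s(i, j) = true

/-- Probability that `g(n, r, p)` is disconnected. -/
def pdisc (n : ℕ) (r p : ℝ) : ℝ :=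
  (μgraph n p {ω | ¬ ∀ i j : Fin n, Relation.ReflTransGen (adj n r ω) i j}).toReal

namespace CovAux

variable {α : Type*} [MeasurableSpace α] {ι : Type*} [DecidableEq ι]

set_option linter.unusedSectionVars false

/-- The event that all `t` points avoid `D` and every cell `C k`, `k ∈ K`, is occupied. -/
def Ev (C : ι → Set α) (K : Finset ι) (D : Set α) (t : ℕ) : Set (Fin t → α) :=
  {ω | (∀ i, ω i ∉ D) ∧ ∀ k ∈ K, ∃ i, ω i ∈ C k}

lemma Ev_eq (C : ι → Set α) (K : Finset ι) (D : Set α) (t : ℕ) :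
    Ev C K D t = (⋂ i, (fun ω : Fin t → α => ω i) ⁻¹' Dᶜ) ∩
      ⋂ k ∈ K, ⋃ i, (fun ω : Fin t → α => ω i) ⁻¹' C k := by
  ext ω
  simp [Ev, Set.mem_iInter, Set.mem_iUnion]

lemma measurableSet_Ev {C : ι → Set α} (hC : ∀ k, MeasurableSet (C k)) {K : Finset ι}
    {D : Set α} (hD : MeasurableSet D) (t : ℕ) : MeasurableSet (Ev C K D t) := by
  rw [Ev_eq]
  refine MeasurableSet.inter ?_ ?_
  · exact MeasurableSet.iInter fun i => (measurable_pi_apply i) hD.compl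
  · exact MeasurableSet.biInter K.countable_toSet fun k _ =>
      MeasurableSet.iUnion fun i => (measurable_pi_apply i) (hC k)

lemma Ev_insert (C : ι → Set α) {K : Finset ι} {a : ι} (D : Set α) (t : ℕ) :
    Ev C (insert a K) D t = Ev C K D t \ Ev C K (D ∪ C a) t := by
  ext ω
  simp only [Ev, Set.mem_setOf_eq, Set.mem_diff, Finset.mem_insert, Set.mem_union]
  constructor
  · rintro ⟨hD, hocc⟩
    refine ⟨⟨hD, fun k hk => hocc k (Or.inr hk)⟩, ?_⟩
    rintro ⟨hD', -⟩
    obtain ⟨i, hi⟩ := hocc a (Or.inl rfl)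
    exact hD' i (Or.inr hi)
  · rintro ⟨⟨hD, hocc⟩, hnot⟩
    refine ⟨hD, ?_⟩
    rintro k (rfl | hk)
    · by_contra hcon
      push_neg at hcon
      exact hnot ⟨fun i h => h.elim (hD i) (hcon i), hocc⟩
    · exact hocc k hk

lemma Ev_subset (C : ι → Set α) (K : Finset ι) (D : Set α) (Ca : Set α) (t : ℕ) :
    Ev C K (D ∪ Ca) t ⊆ Ev C K D t := by
  rintro ω ⟨hD, hocc⟩
  exact ⟨fun i => fun h => hD i (Or.inl h), hocc⟩

variable (μ : Measure α) [IsProbabilityMeasure μ]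

lemma toReal_compl {D : Set α} (hD : MeasurableSet D) :
    (μ Dᶜ).toReal = 1 - (μ D).toReal := by
  rw [measure_compl hD (measure_ne_top μ D), measure_univ,
    ENNReal.toReal_sub_of_le prob_le_one ENNReal.one_ne_top, ENNReal.toReal_one]

/-- Inclusion–exclusion formula for the measure of `Ev`. -/
lemma Ev_measure_formula {C : ι → Set α} (hC : ∀ k, MeasurableSet (C k)) (K : Finset ι)
    (hKK : ∀ k ∈ K, ∀ l ∈ K, k ≠ l → AEDisjoint μ (C k) (C l))
    (D : Set α) (hD : MeasurableSet D)
    (hKD : ∀ k ∈ K, AEDisjoint μ (C k) D) (t : ℕ) :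
    ((Measure.pi fun _ : Fin t => μ) (Ev C K D t)).toReal =
      ∑ T ∈ K.powerset, (-1 : ℝ) ^ T.card *
        (1 - (μ D).toReal - ∑ k ∈ T, (μ (C k)).toReal) ^ t := by
  classical
  induction K using Finset.induction_on generalizing D with
  | empty =>
      have hset : Ev C ∅ D t = Set.pi Set.univ (fun _ : Fin t => Dᶜ) := by
        ext ω; simp [Ev, Set.mem_pi]
      rw [hset, Measure.pi_pi]
      simp only [Finset.powerset_empty, Finset.sum_singleton, Finset.card_empty, pow_zero,
        one_mul, Finset.sum_empty, sub_zero, Finset.prod_const, Finset.card_univ,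
        Fintype.card_fin]
      rw [ENNReal.toReal_pow, toReal_compl μ hD]
  | @insert a K ha ih =>
      have hKK' : ∀ k ∈ K, ∀ l ∈ K, k ≠ l → AEDisjoint μ (C k) (C l) := fun k hk l hl =>
        hKK k (Finset.mem_insert_of_mem hk) l (Finset.mem_insert_of_mem hl)
      have hKD' : ∀ k ∈ K, AEDisjoint μ (C k) D := fun k hk =>
        hKD k (Finset.mem_insert_of_mem hk)
      have haD : AEDisjoint μ (C a) D := hKD a (Finset.mem_insert_self a K)
      have hKDa : ∀ k ∈ K, AEDisjoint μ (C k) (D ∪ C a) := fun k hk =>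
        AEDisjoint.union_right (hKD' k hk)
          (hKK k (Finset.mem_insert_of_mem hk) a (Finset.mem_insert_self a K)
            (fun h => ha (h ▸ hk)))
      have hmeas : MeasurableSet (D ∪ C a) := hD.union (hC a)
      -- measure recursion
      have hsub := Ev_subset C K D (C a) t
      have hdiff : (Measure.pi fun _ : Fin t => μ) (Ev C (insert a K) D t) =
          (Measure.pi fun _ : Fin t => μ) (Ev C K D t) -
          (Measure.pi fun _ : Fin t => μ) (Ev C K (D ∪ C a) t) := by
        rw [Ev_insert]
        exact measure_diff hsub (measurableSet_Ev hC hmeas t).nullMeasurableSet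
          (measure_ne_top _ _)
      have hμDa : (μ (D ∪ C a)).toReal = (μ D).toReal + (μ (C a)).toReal := by
        rw [Set.union_comm, measure_union₀ hD.nullMeasurableSet haD, ENNReal.toReal_add
          (measure_ne_top _ _) (measure_ne_top _ _), add_comm]
      rw [hdiff, ENNReal.toReal_sub_of_le (measure_mono hsub) (measure_ne_top _ _),
        ih hKK' D hD hKD', ih hKK' (D ∪ C a) hmeas hKDa,
        Finset.sum_powerset_insert ha]
      rw [hμDa]
      have : ∀ T ∈ K.powerset, (-1 : ℝ) ^ (insert a T).card *
          (1 - (μ D).toReal - ∑ k ∈ insert a T, (μ (C k)).toReal) ^ t =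
          -((-1 : ℝ) ^ T.card *
            (1 - ((μ D).toReal + (μ (C a)).toReal) - ∑ k ∈ T, (μ (C k)).toReal) ^ t) := by
        intro T hT
        have haT : a ∉ T := fun h => ha (Finset.mem_powerset.mp hT h)
        rw [Finset.card_insert_of_notMem haT, Finset.sum_insert haT]
        ring_nf
      rw [Finset.sum_congr rfl this, Finset.sum_neg_distrib]
      ring
-- continuing namespace CovAux, same variables
variable {C : ι → Set α}

/-- one-step monotonicity: adding an extra point. -/
lemma Ev_measure_succ (hC : ∀ k, MeasurableSet (C k)) (K : Finset ι)
    {D : Set α} (hD : MeasurableSet D) (t : ℕ) :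
    (1 - (μ D).toReal) * ((Measure.pi fun _ : Fin t => μ) (Ev C K D t)).toReal ≤
      ((Measure.pi fun _ : Fin (t+1) => μ) (Ev C K D (t+1))).toReal := by
  classical
  set e := MeasurableEquiv.piFinSuccAbove (fun _ : Fin (t+1) => α) 0 with he
  have hmp : MeasurePreserving e (Measure.pi fun _ : Fin (t+1) => μ)
      (μ.prod (Measure.pi fun _ : Fin t => μ)) :=
    measurePreserving_piFinSuccAbove (fun _ : Fin (t+1) => μ) 0
  have hsub : e ⁻¹' (Dᶜ ×ˢ Ev C K D t) ⊆ Ev C K D (t+1) := by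
    rintro ω hω
    simp only [Set.mem_preimage, Set.mem_prod] at hω
    obtain ⟨h0, hav, hocc⟩ := hω
    constructor
    · intro i
      refine Fin.cases ?_ ?_ i
      · exact h0
      · intro j
        exact hav j
    · intro k hk
      obtain ⟨j, hj⟩ := hocc k hk
      exact ⟨j.succ, hj⟩
  have hm : MeasurableSet (Dᶜ ×ˢ Ev C K D t) :=
    hD.compl.prod (measurableSet_Ev hC hD t)
  have h1 : (Measure.pi fun _ : Fin (t+1) => μ) (e ⁻¹' (Dᶜ ×ˢ Ev C K D t)) =
      μ Dᶜ * (Measure.pi fun _ : Fin t => μ) (Ev C K D t) := by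
    rw [hmp.measure_preimage hm.nullMeasurableSet, Measure.prod_prod]
  have h2 := measure_mono (μ := Measure.pi fun _ : Fin (t+1) => μ) hsub
  rw [h1] at h2
  have := ENNReal.toReal_mono (measure_ne_top _ _) h2
  rw [ENNReal.toReal_mul, toReal_compl μ hD] at this
  exact this

lemma Ev_measure_le_one (hC : ∀ k, MeasurableSet (C k)) (K : Finset ι)
    {D : Set α} (hD : MeasurableSet D) (t : ℕ) :
    ((Measure.pi fun _ : Fin t => μ) (Ev C K D t)).toReal ≤ 1 := by
  have := measure_mono (μ := Measure.pi fun _ : Fin t => μ) (Set.subset_univ (Ev C K D t))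
  rw [measure_univ] at this
  simpa using ENNReal.toReal_mono ENNReal.one_ne_top this

lemma Ev_measure_iter (hC : ∀ k, MeasurableSet (C k)) (K : Finset ι)
    {D : Set α} (hD : MeasurableSet D) (t d : ℕ) :
    (1 - (μ D).toReal) ^ d * ((Measure.pi fun _ : Fin t => μ) (Ev C K D t)).toReal ≤
      ((Measure.pi fun _ : Fin (t+d) => μ) (Ev C K D (t+d))).toReal := by
  induction d with
  | zero => simp
  | succ d ih =>
      have h1 : (0:ℝ) ≤ 1 - (μ D).toReal := by
        have : (μ D).toReal ≤ 1 := by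
          simpa using ENNReal.toReal_mono ENNReal.one_ne_top (prob_le_one (μ := μ) (s := D))
        linarith
      calc (1 - (μ D).toReal) ^ (d+1) *
            ((Measure.pi fun _ : Fin t => μ) (Ev C K D t)).toReal
          = (1 - (μ D).toReal) *
            ((1 - (μ D).toReal) ^ d *
              ((Measure.pi fun _ : Fin t => μ) (Ev C K D t)).toReal) := by ring
        _ ≤ (1 - (μ D).toReal) *
            ((Measure.pi fun _ : Fin (t+d) => μ) (Ev C K D (t+d))).toReal := by
            exact mul_le_mul_of_nonneg_left ih h1
        _ ≤ ((Measure.pi fun _ : Fin (t+d+1) => μ) (Ev C K D (t+d+1))).toReal :=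
            Ev_measure_succ μ hC K hD (t+d)

/-- KEY: carving out a region `D` disjoint from the cells costs at most `(1 - μ D)^n`. -/
lemma Ev_key (hC : ∀ k, MeasurableSet (C k)) (K : Finset ι)
    (hKK : ∀ k ∈ K, ∀ l ∈ K, k ≠ l → AEDisjoint μ (C k) (C l))
    {D : Set α} (hD : MeasurableSet D)
    (hKD : ∀ k ∈ K, AEDisjoint μ (C k) D) (n : ℕ) :
    (1 - (μ D).toReal) ^ n * ((Measure.pi fun _ : Fin n => μ) (Ev C K ∅ n)).toReal ≤
      ((Measure.pi fun _ : Fin n => μ) (Ev C K D n)).toReal := by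
  classical
  set b := (μ D).toReal with hb
  have hb0 : 0 ≤ b := ENNReal.toReal_nonneg
  have hb1 : b ≤ 1 := by
    simpa using ENNReal.toReal_mono ENNReal.one_ne_top (prob_le_one (μ := μ) (s := D))
  set G : ℕ → ℝ := fun j => ((Measure.pi fun _ : Fin j => μ) (Ev C K D j)).toReal with hG
  have hG0 : ∀ j, 0 ≤ G j := fun j => ENNReal.toReal_nonneg
  have hGiter : ∀ j d : ℕ, (1 - b) ^ d * G j ≤ G (j + d) := fun j d =>
    Ev_measure_iter μ hC K hD j d
  have hKe : ∀ k ∈ K, AEDisjoint μ (C k) (∅ : Set α) := by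
    intro k hk
    simp [AEDisjoint]
  -- formula for F and G
  have hF := Ev_measure_formula μ hC K hKK ∅ MeasurableSet.empty hKe n
  have hGf : ∀ j, G j = ∑ T ∈ K.powerset, (-1 : ℝ) ^ T.card *
      (1 - b - ∑ k ∈ T, (μ (C k)).toReal) ^ j := fun j =>
    Ev_measure_formula μ hC K hKK D hD hKD j
  simp only [measure_empty, ENNReal.toReal_zero, sub_zero] at hF
  -- binomial decomposition : F = ∑_j choose n j * b^(n-j) * G j
  have hbin : ((Measure.pi fun _ : Fin n => μ) (Ev C K ∅ n)).toReal =
      ∑ j ∈ Finset.range (n+1), (n.choose j : ℝ) * b ^ (n - j) * G j := by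
    rw [hF]
    have : ∀ T ∈ K.powerset, (-1:ℝ)^T.card * (1 - ∑ k ∈ T, (μ (C k)).toReal) ^ n =
        ∑ j ∈ Finset.range (n+1), (-1:ℝ)^T.card *
          ((1 - b - ∑ k ∈ T, (μ (C k)).toReal) ^ j * b ^ (n - j) * (n.choose j : ℝ)) := by
      intro T hT
      rw [← Finset.mul_sum]
      congr 1
      have := add_pow (1 - b - ∑ k ∈ T, (μ (C k)).toReal) b n
      rw [← this]
      ring_nf
    rw [Finset.sum_congr rfl this, Finset.sum_comm]
    refine Finset.sum_congr rfl fun j hj => ?_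
    rw [hGf j, Finset.mul_sum]
    refine Finset.sum_congr rfl fun T hT => ?_
    ring
  -- conclusion
  have hterm : ∀ j ∈ Finset.range (n+1),
      (n.choose j : ℝ) * b ^ (n - j) * G j * (1 - b) ^ n ≤
      (n.choose j : ℝ) * b ^ (n - j) * (1 - b) ^ j * G n := by
    intro j hj
    have hjn : j ≤ n := Nat.lt_succ_iff.mp (Finset.mem_range.mp hj)
    have h1 : (1 - b) ^ n = (1 - b) ^ j * (1 - b) ^ (n - j) := by
      rw [← pow_add]
      congr 1
      omega
    have h2 : (1 - b) ^ (n - j) * G j ≤ G n := by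
      have := hGiter j (n - j)
      rwa [Nat.add_sub_cancel' hjn] at this
    have hnn : (0:ℝ) ≤ (n.choose j : ℝ) * b ^ (n - j) :=
      mul_nonneg (Nat.cast_nonneg _) (pow_nonneg hb0 _)
    calc (n.choose j : ℝ) * b ^ (n - j) * G j * (1 - b) ^ n
        = ((n.choose j : ℝ) * b ^ (n - j)) * ((1 - b) ^ j * ((1 - b) ^ (n - j) * G j)) := by
          rw [h1]; ring
      _ ≤ ((n.choose j : ℝ) * b ^ (n - j)) * ((1 - b) ^ j * G n) := by
          refine mul_le_mul_of_nonneg_left ?_ hnn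
          refine mul_le_mul_of_nonneg_left h2 (pow_nonneg (by linarith) _)
      _ = (n.choose j : ℝ) * b ^ (n - j) * (1 - b) ^ j * G n := by ring
  have hsum : (∑ j ∈ Finset.range (n+1), (n.choose j : ℝ) * b ^ (n - j) * (1 - b) ^ j) = 1 := by
    have h := add_pow (1 - b) b n
    simp only [sub_add_cancel, one_pow] at h
    have h2 : (∑ j ∈ Finset.range (n+1), (n.choose j : ℝ) * b ^ (n - j) * (1 - b) ^ j) =
        ∑ j ∈ Finset.range (n+1), (1 - b) ^ j * b ^ (n - j) * (n.choose j : ℝ) :=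
      Finset.sum_congr rfl fun j hj => by ring
    rw [h2]
    exact h.symm
  calc (1 - b) ^ n * ((Measure.pi fun _ : Fin n => μ) (Ev C K ∅ n)).toReal
      = ∑ j ∈ Finset.range (n+1), (n.choose j : ℝ) * b ^ (n - j) * G j * (1 - b) ^ n := by
        rw [hbin, Finset.mul_sum]
        exact Finset.sum_congr rfl fun j _ => by ring
    _ ≤ ∑ j ∈ Finset.range (n+1), (n.choose j : ℝ) * b ^ (n - j) * (1 - b) ^ j * G n :=
        Finset.sum_le_sum hterm
    _ = (∑ j ∈ Finset.range (n+1), (n.choose j : ℝ) * b ^ (n - j) * (1 - b) ^ j) * G n := by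
        rw [Finset.sum_mul]
    _ = G n := by rw [hsum, one_mul]

/-- Main abstract bound. -/
lemma Ev_measure_le_prod (hC : ∀ k, MeasurableSet (C k)) (K : Finset ι)
    (hKK : ∀ k ∈ K, ∀ l ∈ K, k ≠ l → AEDisjoint μ (C k) (C l)) (n : ℕ) :
    ((Measure.pi fun _ : Fin n => μ) (Ev C K ∅ n)).toReal ≤
      ∏ k ∈ K, (1 - (1 - (μ (C k)).toReal) ^ n) := by
  classical
  induction K using Finset.induction_on with
  | empty => simpa using Ev_measure_le_one μ hC ∅ MeasurableSet.empty n
  | @insert a K ha ih =>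
      have hKK' : ∀ k ∈ K, ∀ l ∈ K, k ≠ l → AEDisjoint μ (C k) (C l) := fun k hk l hl =>
        hKK k (Finset.mem_insert_of_mem hk) l (Finset.mem_insert_of_mem hl)
      have hKa : ∀ k ∈ K, AEDisjoint μ (C k) (C a) := fun k hk =>
        hKK k (Finset.mem_insert_of_mem hk) a (Finset.mem_insert_self a K)
          (fun h => ha (h ▸ hk))
      have hsub : Ev C K (∅ ∪ C a) n ⊆ Ev C K ∅ n := Ev_subset C K ∅ (C a) n
      have hdiff : ((Measure.pi fun _ : Fin n => μ) (Ev C (insert a K) ∅ n)).toReal =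
          ((Measure.pi fun _ : Fin n => μ) (Ev C K ∅ n)).toReal -
          ((Measure.pi fun _ : Fin n => μ) (Ev C K (∅ ∪ C a) n)).toReal := by
        rw [Ev_insert, measure_diff hsub
          (measurableSet_Ev hC (MeasurableSet.empty.union (hC a)) n).nullMeasurableSet
          (measure_ne_top _ _),
          ENNReal.toReal_sub_of_le (measure_mono hsub) (measure_ne_top _ _)]
      have hEa : Ev C K (∅ ∪ C a) n = Ev C K (C a) n := by
        rw [Set.empty_union]
      have hkey := Ev_key μ hC K hKK' (hC a) hKa n
      set F := ((Measure.pi fun _ : Fin n => μ) (Ev C K ∅ n)).toReal with hFdef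
      have hF0 : 0 ≤ F := ENNReal.toReal_nonneg
      have hνa1 : (μ (C a)).toReal ≤ 1 := by
        simpa using ENNReal.toReal_mono ENNReal.one_ne_top (prob_le_one (μ := μ) (s := C a))
      have hνa0 : 0 ≤ (μ (C a)).toReal := ENNReal.toReal_nonneg
      have hfac0 : 0 ≤ 1 - (1 - (μ (C a)).toReal) ^ n := by
        have : (1 - (μ (C a)).toReal) ^ n ≤ 1 := by
          refine pow_le_one₀ (by linarith) (by linarith)
        linarith
      rw [Finset.prod_insert ha, hdiff, hEa]
      calc F - ((Measure.pi fun _ : Fin n => μ) (Ev C K (C a) n)).toReal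
          ≤ F - (1 - (μ (C a)).toReal) ^ n * F := by linarith [hkey]
        _ = (1 - (1 - (μ (C a)).toReal) ^ n) * F := by ring
        _ ≤ (1 - (1 - (μ (C a)).toReal) ^ n) * ∏ k ∈ K, (1 - (1 - (μ (C k)).toReal) ^ n) :=
            mul_le_mul_of_nonneg_left (ih hKK') hfac0

end CovAux

namespace CovGeo

open Real

@[simp] lemma pt_apply_zero (x y : ℝ) : (pt x y) 0 = x := rfl
@[simp] lemma pt_apply_one (x y : ℝ) : (pt x y) 1 = y := rfl

lemma S0_eq : S0 = ((MeasurableEquiv.toLp 2 (Fin 2 → ℝ)).symm) ⁻¹'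
    (Set.pi Set.univ fun _ : Fin 2 => Set.Icc (-(1:ℝ)/2) (1/2)) := by
  ext X
  simp only [S0, Set.mem_setOf_eq, Set.mem_preimage, Set.mem_pi, Set.mem_univ, true_implies]
  rw [Fin.forall_fin_two]
  rfl

lemma measurableSet_S0 : MeasurableSet S0 := by
  rw [S0_eq]
  exact ((MeasurableEquiv.toLp 2 (Fin 2 → ℝ)).symm).measurable
    (MeasurableSet.univ_pi fun _ => measurableSet_Icc)

lemma volume_S0 : volume S0 = 1 := by
  rw [S0_eq, (EuclideanSpace.volume_preserving_symm_measurableEquiv_toLp (Fin 2)).measure_preimage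
    (MeasurableSet.univ_pi fun _ => measurableSet_Icc).nullMeasurableSet]
  rw [volume_pi_pi]
  norm_num

lemma measurable_eval (κ : Fin 2) : Measurable (fun x : Pt => x κ) :=
  (measurable_pi_apply κ).comp ((MeasurableEquiv.toLp 2 (Fin 2 → ℝ)).symm).measurable

lemma volume_hyperplane (κ : Fin 2) (a : ℝ) : volume {x : Pt | x κ = a} = 0 := by
  classical
  have hset : {f : Fin 2 → ℝ | f κ = a} =
      Set.pi Set.univ (fun j => if j = κ then ({a} : Set ℝ) else Set.univ) := by
    ext f
    simp only [Set.mem_setOf_eq, Set.mem_pi, Set.mem_univ, true_implies]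
    constructor
    · intro h j
      by_cases hj : j = κ
      · subst hj; simp [h]
      · simp [hj]
    · intro h
      have := h κ
      simpa using this
  have : {x : Pt | x κ = a} = ((MeasurableEquiv.toLp 2 (Fin 2 → ℝ)).symm) ⁻¹'
      {f : Fin 2 → ℝ | f κ = a} := rfl
  have hm : MeasurableSet (Set.pi Set.univ
      (fun j : Fin 2 => if j = κ then ({a} : Set ℝ) else Set.univ)) :=
    MeasurableSet.univ_pi fun j => by
      by_cases h : j = κ <;> simp [h]
  rw [this, (EuclideanSpace.volume_preserving_symm_measurableEquiv_toLp (Fin 2)).measure_preimage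
    (hset ▸ hm).nullMeasurableSet, hset, volume_pi_pi]
  refine Finset.prod_eq_zero (Finset.mem_univ κ) ?_
  simp

/-- Reflection of the `κ`-th coordinate about the value `a`. -/
def reflMap (κ : Fin 2) (a : ℝ) : Pt → Pt := fun x =>
  (LinearIsometryEquiv.piLpCongrRight 2
    (fun j : Fin 2 => if j = κ then LinearIsometryEquiv.neg ℝ else
      LinearIsometryEquiv.refl ℝ ℝ)) x + EuclideanSpace.single κ (2 * a)

lemma reflMap_apply (κ : Fin 2) (a : ℝ) (x : Pt) (j : Fin 2) :
    reflMap κ a x j = (if j = κ then -(x j) else x j) + (if j = κ then 2 * a else 0) := by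
  rw [reflMap, PiLp.add_apply, LinearIsometryEquiv.piLpCongrRight_apply,
    PiLp.toLp_apply, EuclideanSpace.single_apply]
  congr 1
  split
  · simp
  · simp

lemma reflMap_apply_self (κ : Fin 2) (a : ℝ) (x : Pt) :
    reflMap κ a x κ = 2 * a - x κ := by
  rw [reflMap_apply]; simp; ring

lemma reflMap_apply_ne (κ : Fin 2) (a : ℝ) (x : Pt) {j : Fin 2} (hj : j ≠ κ) :
    reflMap κ a x j = x j := by
  rw [reflMap_apply]; simp [hj]

lemma reflMap_measurePreserving (κ : Fin 2) (a : ℝ) :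
    MeasurePreserving (reflMap κ a) (volume : Measure Pt) volume := by
  have h1 : MeasurePreserving (fun x : Pt => x + EuclideanSpace.single κ (2 * a))
      (volume : Measure Pt) volume := measurePreserving_add_right volume _
  have h2 : MeasurePreserving
      (LinearIsometryEquiv.piLpCongrRight 2
        (fun j : Fin 2 => if j = κ then LinearIsometryEquiv.neg ℝ else
          LinearIsometryEquiv.refl ℝ ℝ) : Pt → Pt) (volume : Measure Pt) volume :=
    (LinearIsometryEquiv.piLpCongrRight 2
      (fun j : Fin 2 => if j = κ then LinearIsometryEquiv.neg ℝ else
        LinearIsometryEquiv.refl ℝ ℝ)).measurePreserving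
  exact h1.comp h2

lemma reflMap_dist (κ : Fin 2) (a : ℝ) (x y : Pt) :
    dist (reflMap κ a x) (reflMap κ a y) = dist x y := by
  rw [reflMap, reflMap, dist_add_right, LinearIsometryEquiv.dist_map]

lemma reflMap_fixed (κ : Fin 2) (c : Pt) :
    reflMap κ (c κ) c = c := by
  apply PiLp.ext
  intro j
  by_cases hj : j = κ
  · subst hj; rw [reflMap_apply_self]; ring
  · exact reflMap_apply_ne κ _ c hj

lemma reflMap_ball (κ : Fin 2) (c : Pt) (r : ℝ) :
    reflMap κ (c κ) ⁻¹' closedBall c r = closedBall c r := by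
  ext x
  simp only [Set.mem_preimage, mem_closedBall]
  have h1 := reflMap_dist κ (c κ) x c
  rw [reflMap_fixed κ c] at h1
  rw [h1]



lemma measurableSet_ge (κ : Fin 2) (a : ℝ) : MeasurableSet {x : Pt | a ≤ x κ} :=
  measurableSet_le measurable_const (measurable_eval κ)

lemma measurableSet_le' (κ : Fin 2) (a : ℝ) : MeasurableSet {x : Pt | x κ ≤ a} :=
  measurableSet_le (measurable_eval κ) measurable_const

/-- Halving lemma: a set symmetric about the hyperplane `xκ = a` has half its volume
on each side. -/
lemma volume_half (κ : Fin 2) (a : ℝ) {S : Set Pt} (hS : MeasurableSet S)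
    (hfin : volume S ≠ ⊤) (hsym : reflMap κ a ⁻¹' S = S) :
    volume (S ∩ {x : Pt | a ≤ x κ}) = volume S / 2 ∧
    volume (S ∩ {x : Pt | x κ ≤ a}) = volume S / 2 := by
  set A := S ∩ {x : Pt | a ≤ x κ} with hA
  set B := S ∩ {x : Pt | x κ ≤ a} with hB
  have hpre : reflMap κ a ⁻¹' B = A := by
    ext x
    simp only [hA, hB, Set.mem_preimage, Set.mem_inter_iff, Set.mem_setOf_eq]
    constructor
    · rintro ⟨h1, h2⟩
      rw [← hsym]
      refine ⟨h1, ?_⟩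
      rw [reflMap_apply_self] at h2
      linarith
    · rintro ⟨h1, h2⟩
      rw [← hsym] at h1
      refine ⟨h1, ?_⟩
      rw [reflMap_apply_self]
      linarith
  have hAB : volume A = volume B := by
    rw [← hpre, (reflMap_measurePreserving κ a).measure_preimage
      (hS.inter (measurableSet_le' κ a)).nullMeasurableSet]
  have hunion : A ∪ B = S := by
    ext x
    simp only [hA, hB, Set.mem_union, Set.mem_inter_iff, Set.mem_setOf_eq]
    constructor
    · rintro (⟨h, -⟩ | ⟨h, -⟩) <;> exact h
    · intro h
      rcases le_total a (x κ) with h2 | h2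
      · exact Or.inl ⟨h, h2⟩
      · exact Or.inr ⟨h, h2⟩
  have hinter : volume (A ∩ B) = 0 := by
    refine measure_mono_null ?_ (volume_hyperplane κ a)
    rintro x ⟨⟨-, h1⟩, ⟨-, h2⟩⟩
    exact le_antisymm h2 h1
  have hsum : volume S = 2 * volume A := by
    have := measure_union_add_inter (μ := (volume : Measure Pt)) A
      (hS.inter (measurableSet_le' κ a))
    rw [hunion, hinter, add_zero, ← hAB, ← two_mul] at this
    exact this
  have hAval : volume A = volume S / 2 :=
    (ENNReal.eq_div_iff (by norm_num) (by norm_num)).mpr hsum.symm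
  exact ⟨hAval, hAB ▸ hAval⟩

lemma volume_closedBall_pt (c : Pt) {r : ℝ} (hr : 0 ≤ r) :
    volume (closedBall c r) = ENNReal.ofReal (π * r ^ 2) := by
  rw [EuclideanSpace.volume_closedBall]
  simp only [Fintype.card_fin]
  rw [show ((2:ℕ):ℝ) / 2 + 1 = 2 by norm_num, Real.Gamma_two]
  rw [← ENNReal.ofReal_pow hr, ← ENNReal.ofReal_mul (by positivity)]
  congr 1
  rw [div_one, Real.sq_sqrt pi_nonneg]
  ring

lemma volume_closedBall_ne_top (c : Pt) (r : ℝ) : volume (closedBall c r) ≠ ⊤ :=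
  measure_closedBall_lt_top.ne

/-- Half-space cut through the center takes half of the closed ball. -/
lemma volume_ball_half_ge (c : Pt) {r : ℝ} (hr : 0 ≤ r) (κ : Fin 2) :
    volume (closedBall c r ∩ {x : Pt | c κ ≤ x κ}) = ENNReal.ofReal (π * r ^ 2) / 2 := by
  have := (volume_half κ (c κ) measurableSet_closedBall
    (volume_closedBall_ne_top c r) (reflMap_ball κ c r)).1
  rwa [volume_closedBall_pt c hr] at this

lemma volume_ball_half_le (c : Pt) {r : ℝ} (hr : 0 ≤ r) (κ : Fin 2) :
    volume (closedBall c r ∩ {x : Pt | x κ ≤ c κ}) = ENNReal.ofReal (π * r ^ 2) / 2 := by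
  have := (volume_half κ (c κ) measurableSet_closedBall
    (volume_closedBall_ne_top c r) (reflMap_ball κ c r)).2
  rwa [volume_closedBall_pt c hr] at this

/-- Signed half-space: `true` means `a ≤ xκ`. -/
def Hs (κ : Fin 2) (s : Bool) (a : ℝ) : Set Pt :=
  if s then {x : Pt | a ≤ x κ} else {x : Pt | x κ ≤ a}

lemma measurableSet_Hs (κ : Fin 2) (s : Bool) (a : ℝ) : MeasurableSet (Hs κ s a) := by
  cases s
  · exact measurableSet_le' κ a
  · exact measurableSet_ge κ a

lemma volume_ball_Hs (c : Pt) {r : ℝ} (hr : 0 ≤ r) (κ : Fin 2) (s : Bool) :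
    volume (closedBall c r ∩ Hs κ s (c κ)) = ENNReal.ofReal (π * r ^ 2) / 2 := by
  cases s
  · exact volume_ball_half_le c hr κ
  · exact volume_ball_half_ge c hr κ

lemma reflMap_Hs_zero (s : Bool) (a b : ℝ) :
    reflMap 1 b ⁻¹' Hs 0 s a = Hs 0 s a := by
  ext x
  have h := reflMap_apply_ne 1 b x (show (0 : Fin 2) ≠ 1 by decide)
  cases s <;> simp only [Hs, Set.mem_preimage, Set.mem_setOf_eq, if_true, if_false,
    Bool.false_eq_true, h]

lemma volume_ball_quarter (c : Pt) {r : ℝ} (hr : 0 ≤ r) (s0 s1 : Bool) :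
    volume (closedBall c r ∩ Hs 0 s0 (c 0) ∩ Hs 1 s1 (c 1)) =
      ENNReal.ofReal (π * r ^ 2) / 2 / 2 := by
  have hS : MeasurableSet (closedBall c r ∩ Hs 0 s0 (c 0)) :=
    measurableSet_closedBall.inter (measurableSet_Hs 0 s0 (c 0))
  have hfin : volume (closedBall c r ∩ Hs 0 s0 (c 0)) ≠ ⊤ :=
    ne_top_of_le_ne_top (volume_closedBall_ne_top c r)
      (measure_mono Set.inter_subset_left)
  have hsym : reflMap 1 (c 1) ⁻¹' (closedBall c r ∩ Hs 0 s0 (c 0)) =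
      closedBall c r ∩ Hs 0 s0 (c 0) := by
    rw [Set.preimage_inter, reflMap_ball, reflMap_Hs_zero]
  have hhalf := volume_half 1 (c 1) hS hfin hsym
  have hv := volume_ball_Hs c hr 0 s0
  cases s1
  · have := hhalf.2
    rw [hv] at this
    simpa [Hs] using this
  · have := hhalf.1
    rw [hv] at this
    simpa [Hs] using this


variable {m : ℕ} {r : ℝ}

/-- Grid coordinate. -/
def cc (m : ℕ) (i : Fin (m+2)) : ℝ := -(1:ℝ)/2 + (i : ℝ) / (m+1)

/-- Grid point. -/
def gp (m : ℕ) (k : Fin (m+2) × Fin (m+2)) : Pt := pt (cc m k.1) (cc m k.2)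

/-- Cell around a grid point. -/
def cell (m : ℕ) (r : ℝ) (k : Fin (m+2) × Fin (m+2)) : Set Pt :=
  closedBall (gp m k) r ∩ S0

lemma gp_zero (k : Fin (m+2) × Fin (m+2)) : gp m k 0 = cc m k.1 := rfl
lemma gp_one (k : Fin (m+2) × Fin (m+2)) : gp m k 1 = cc m k.2 := rfl

lemma cc_zero : cc m 0 = -(1:ℝ)/2 := by simp [cc]

lemma cc_last : cc m (Fin.last (m+1)) = 1/2 := by
  have h : ((m:ℝ) + 1) ≠ 0 := by positivity
  simp only [cc, Fin.val_last]
  push_cast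
  field_simp
  ring

lemma cc_mem (i : Fin (m+2)) : cc m i ∈ Set.Icc (-(1:ℝ)/2) (1/2) := by
  have h1 : (0:ℝ) ≤ (i : ℝ) := by positivity
  have h2 : (i : ℝ) ≤ (m:ℝ) + 1 := by
    have := Fin.is_le i
    exact_mod_cast this
  have h3 : (0:ℝ) < (m:ℝ) + 1 := by positivity
  constructor
  · have : (0:ℝ) ≤ (i:ℝ)/((m:ℝ)+1) := by positivity
    simp only [cc]
    push_cast
    linarith
  · have : (i:ℝ)/((m:ℝ)+1) ≤ 1 := by
      rw [div_le_one h3]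
      linarith
    simp only [cc]
    push_cast
    linarith

lemma gp_mem_S0 (k : Fin (m+2) × Fin (m+2)) : gp m k ∈ S0 :=
  ⟨cc_mem k.1, cc_mem k.2⟩

lemma abs_coord_le_dist (x y : Pt) (κ : Fin 2) : |x κ - y κ| ≤ dist x y := by
  have h : dist (x κ) (y κ) ^ 2 ≤ ∑ i, dist (x i) (y i) ^ 2 :=
    Finset.single_le_sum (f := fun i => dist (x i) (y i) ^ 2)
      (fun i _ => sq_nonneg _) (Finset.mem_univ κ)
  calc |x κ - y κ| = dist (x κ) (y κ) := (Real.dist_eq _ _).symm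
    _ = √(dist (x κ) (y κ) ^ 2) := (Real.sqrt_sq dist_nonneg).symm
    _ ≤ √(∑ i, dist (x i) (y i) ^ 2) := Real.sqrt_le_sqrt h
    _ = dist x y := (EuclideanSpace.dist_eq x y).symm

lemma cc_sep {i j : Fin (m+2)} (hij : i ≠ j) : 1/((m:ℝ)+1) ≤ |cc m i - cc m j| := by
  have h3 : (0:ℝ) < (m:ℝ) + 1 := by positivity
  have hvne : (i.val : ℤ) ≠ (j.val : ℤ) := by
    intro h
    exact hij (Fin.ext (by exact_mod_cast h))
  have h1 : (1:ℤ) ≤ |(i.val : ℤ) - (j.val : ℤ)| := Int.one_le_abs (sub_ne_zero.mpr hvne)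
  have h1R : (1:ℝ) ≤ |(i.val : ℝ) - (j.val : ℝ)| := by
    have := (Int.cast_le (R := ℝ)).mpr h1
    push_cast at this
    simpa using this
  have : cc m i - cc m j = ((i.val:ℝ) - (j.val:ℝ))/((m:ℝ)+1) := by
    simp only [cc]
    push_cast
    ring
  rw [this, abs_div, abs_of_pos h3]
  exact div_le_div_of_nonneg_right h1R h3.le

lemma gp_sep {k l : Fin (m+2) × Fin (m+2)} (hkl : k ≠ l) :
    1/((m:ℝ)+1) ≤ dist (gp m k) (gp m l) := by
  by_cases h1 : k.1 = l.1
  · have h2 : k.2 ≠ l.2 := fun h2 => hkl (Prod.ext h1 h2)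
    calc 1/((m:ℝ)+1) ≤ |cc m k.2 - cc m l.2| := cc_sep h2
      _ = |gp m k 1 - gp m l 1| := rfl
      _ ≤ dist (gp m k) (gp m l) := abs_coord_le_dist _ _ 1
  · calc 1/((m:ℝ)+1) ≤ |cc m k.1 - cc m l.1| := cc_sep h1
      _ = |gp m k 0 - gp m l 0| := rfl
      _ ≤ dist (gp m k) (gp m l) := abs_coord_le_dist _ _ 0

lemma cells_aedisjoint (hr0 : 0 < r) (hsep : 2*r ≤ 1/((m:ℝ)+1))
    {k l : Fin (m+2) × Fin (m+2)} (hkl : k ≠ l) :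
    AEDisjoint (volume.restrict S0) (cell m r k) (cell m r l) := by
  have hsub : cell m r k ∩ cell m r l ⊆ sphere (gp m k) r := by
    rintro x ⟨⟨hxk, -⟩, ⟨hxl, -⟩⟩
    have hd : 2*r ≤ dist (gp m k) (gp m l) := le_trans hsep (gp_sep hkl)
    have h1 : dist (gp m k) (gp m l) ≤ dist x (gp m k) + dist x (gp m l) :=
      dist_triangle_left _ _ _
    have h2 : r ≤ dist x (gp m k) := by
      rw [mem_closedBall] at hxl
      linarith
    rw [mem_closedBall] at hxk
    exact mem_sphere.mpr (le_antisymm hxk h2)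
  refine le_antisymm ?_ zero_le
  calc (volume.restrict S0) (cell m r k ∩ cell m r l)
      ≤ volume (cell m r k ∩ cell m r l) := Measure.restrict_le_self _
    _ ≤ volume (sphere (gp m k) r) := measure_mono hsub
    _ = 0 := Measure.addHaar_sphere volume _ r

/-- Weight of a grid index: boundary rows/columns count half. -/
def wb (m : ℕ) (i : Fin (m+2)) : ℝ := if i = 0 ∨ i = Fin.last (m+1) then 1/2 else 1

lemma S0_coord {x : Pt} (hx : x ∈ S0) (κ : Fin 2) :
    x κ ∈ Set.Icc (-(1:ℝ)/2) (1/2) := by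
  fin_cases κ
  · exact hx.1
  · exact hx.2

lemma S0_subset_exists (κ : Fin 2) {i : Fin (m+2)} (hb : i = 0 ∨ i = Fin.last (m+1)) :
    ∃ s : Bool, S0 ⊆ Hs κ s (cc m i) := by
  rcases hb with h0 | hl
  · subst h0
    refine ⟨true, fun x hx => ?_⟩
    simpa [Hs, cc_zero] using (S0_coord hx κ).1
  · subst hl
    refine ⟨false, fun x hx => ?_⟩
    simpa [Hs, cc_last] using (S0_coord hx κ).2

lemma measurableSet_cell (m : ℕ) (r : ℝ) (k : Fin (m+2) × Fin (m+2)) :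
    MeasurableSet (cell m r k) :=
  measurableSet_closedBall.inter measurableSet_S0

lemma cell_restrict (k : Fin (m+2) × Fin (m+2)) :
    (volume.restrict S0) (cell m r k) = volume (cell m r k) := by
  rw [Measure.restrict_apply (measurableSet_cell m r k)]
  congr 1
  rw [cell, Set.inter_assoc, Set.inter_self]

lemma toReal_quarter (hr0 : 0 ≤ r) :
    (ENNReal.ofReal (π * r ^ 2) / 2 / 2).toReal = π * r ^ 2 / 2 / 2 := by
  rw [ENNReal.toReal_div, ENNReal.toReal_div, ENNReal.toReal_ofReal (by positivity)]
  norm_num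

lemma toReal_half (hr0 : 0 ≤ r) :
    (ENNReal.ofReal (π * r ^ 2) / 2).toReal = π * r ^ 2 / 2 := by
  rw [ENNReal.toReal_div, ENNReal.toReal_ofReal (by positivity)]
  norm_num

lemma cell_bound (hr0 : 0 ≤ r) (k : Fin (m+2) × Fin (m+2)) :
    ((volume.restrict S0) (cell m r k)).toReal ≤ π * r ^ 2 * (wb m k.1 * wb m k.2) := by
  rw [cell_restrict]
  by_cases b1 : k.1 = 0 ∨ k.1 = Fin.last (m+1) <;>
    by_cases b2 : k.2 = 0 ∨ k.2 = Fin.last (m+1)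
  · -- corner
    obtain ⟨s0, hs0⟩ := S0_subset_exists (m := m) 0 b1
    obtain ⟨s1, hs1⟩ := S0_subset_exists (m := m) 1 b2
    have hsub : cell m r k ⊆
        closedBall (gp m k) r ∩ Hs 0 s0 (gp m k 0) ∩ Hs 1 s1 (gp m k 1) := by
      rintro x ⟨hb, hS⟩
      exact ⟨⟨hb, hs0 hS⟩, hs1 hS⟩
    have hle := measure_mono (μ := (volume : Measure Pt)) hsub
    rw [volume_ball_quarter (gp m k) hr0 s0 s1] at hle
    have := ENNReal.toReal_mono (by
      rw [← volume_ball_quarter (gp m k) hr0 s0 s1]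
      exact (ne_top_of_le_ne_top (volume_closedBall_ne_top (gp m k) r)
        (measure_mono (Set.inter_subset_left.trans Set.inter_subset_left)))) hle
    rw [toReal_quarter hr0] at this
    simp only [wb, if_pos b1, if_pos b2]
    linarith
  · -- k.1 boundary only
    obtain ⟨s0, hs0⟩ := S0_subset_exists (m := m) 0 b1
    have hsub : cell m r k ⊆ closedBall (gp m k) r ∩ Hs 0 s0 (gp m k 0) := by
      rintro x ⟨hb, hS⟩
      exact ⟨hb, hs0 hS⟩
    have hle := measure_mono (μ := (volume : Measure Pt)) hsub
    rw [volume_ball_Hs (gp m k) hr0 0 s0] at hle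
    have := ENNReal.toReal_mono (by
      rw [← volume_ball_Hs (gp m k) hr0 0 s0]
      exact ne_top_of_le_ne_top (volume_closedBall_ne_top (gp m k) r)
        (measure_mono Set.inter_subset_left)) hle
    rw [toReal_half hr0] at this
    simp only [wb, if_pos b1, if_neg b2]
    linarith
  · -- k.2 boundary only
    obtain ⟨s1, hs1⟩ := S0_subset_exists (m := m) 1 b2
    have hsub : cell m r k ⊆ closedBall (gp m k) r ∩ Hs 1 s1 (gp m k 1) := by
      rintro x ⟨hb, hS⟩
      exact ⟨hb, hs1 hS⟩
    have hle := measure_mono (μ := (volume : Measure Pt)) hsub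
    rw [volume_ball_Hs (gp m k) hr0 1 s1] at hle
    have := ENNReal.toReal_mono (by
      rw [← volume_ball_Hs (gp m k) hr0 1 s1]
      exact ne_top_of_le_ne_top (volume_closedBall_ne_top (gp m k) r)
        (measure_mono Set.inter_subset_left)) hle
    rw [toReal_half hr0] at this
    simp only [wb, if_neg b1, if_pos b2]
    linarith
  · -- interior
    have hsub : cell m r k ⊆ closedBall (gp m k) r := Set.inter_subset_left
    have hle := measure_mono (μ := (volume : Measure Pt)) hsub
    rw [volume_closedBall_pt (gp m k) hr0] at hle
    have := ENNReal.toReal_mono ENNReal.ofReal_ne_top hle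
    rw [ENNReal.toReal_ofReal (by positivity)] at this
    simp only [wb, if_neg b1, if_neg b2]
    linarith


lemma group_pow (x y z : ℝ) (m : ℕ) :
    (x ^ 2 * y ^ m) ^ 2 * (y ^ 2 * z ^ m) ^ m = x ^ 4 * y ^ (4*m) * z ^ (m^2) := by
  rw [mul_pow, mul_pow, ← pow_mul, ← pow_mul, ← pow_mul, ← pow_mul]
  have h1 : y ^ (m*2) * (y ^ (2*m) * z ^ (m*m)) = y ^ (m*2+2*m) * z ^ (m*m) := by
    rw [pow_add]; ring
  have h2 : m*2+2*m = 4*m := by ring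
  have h3 : m*m = m^2 := by ring
  calc x ^ (2*2) * y ^ (m*2) * (y ^ (2*m) * z ^ (m*m))
      = x ^ (2*2) * (y ^ (m*2) * (y ^ (2*m) * z ^ (m*m))) := by ring
    _ = x ^ (2*2) * (y ^ (m*2+2*m) * z ^ (m*m)) := by rw [h1]
    _ = x ^ 4 * y ^ (4*m) * z ^ (m^2) := by rw [h2, h3]; norm_num; ring

lemma wb_nonneg (m : ℕ) (i : Fin (m+2)) : 0 ≤ wb m i := by
  unfold wb; split <;> norm_num

lemma wb_le_one (m : ℕ) (i : Fin (m+2)) : wb m i ≤ 1 := by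
  unfold wb; split <;> norm_num

lemma prod_w (m : ℕ) (φ : ℝ → ℝ) :
    ∏ i : Fin (m+2), φ (wb m i) = φ (1/2) ^ 2 * φ 1 ^ m := by
  classical
  set Bd : Finset (Fin (m+2)) := {0, Fin.last (m+1)} with hBd
  have h0l : (0 : Fin (m+2)) ≠ Fin.last (m+1) := by
    intro h
    have := congrArg Fin.val h
    simp [Fin.val_last] at this
  have hcard : Bd.card = 2 := by
    rw [hBd, Finset.card_insert_of_notMem (by simp [h0l]), Finset.card_singleton]
  have hcardc : Bdᶜ.card = m := by
    rw [Finset.card_compl, hcard]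
    simp
  have hmem : ∀ i : Fin (m+2), i ∈ Bd ↔ (i = 0 ∨ i = Fin.last (m+1)) := by
    intro i
    simp [hBd]
  rw [← Finset.prod_mul_prod_compl Bd (fun i => φ (wb m i))]
  congr 1
  · rw [Finset.prod_congr rfl (fun i hi => by
      rw [show wb m i = 1/2 from if_pos ((hmem i).mp hi)]), Finset.prod_const, hcard]
  · rw [Finset.prod_congr rfl (fun i hi => by
      rw [show wb m i = 1 from if_neg (by
        rw [← hmem i]; exact Finset.mem_compl.mp hi)]), Finset.prod_const, hcardc]

instance : IsProbabilityMeasure (volume.restrict S0) :=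
  ⟨by rw [Measure.restrict_apply_univ, volume_S0]⟩

lemma bad_null (n : ℕ) :
    (Measure.pi fun _ : Fin n => volume.restrict S0)
      (⋃ i, (fun ω : Fin n → Pt => ω i) ⁻¹' S0ᶜ) = 0 := by
  classical
  refine measure_iUnion_null fun i => ?_
  have hset : ((fun ω : Fin n → Pt => ω i) ⁻¹' S0ᶜ) =
      Set.pi Set.univ (fun j : Fin n => if j = i then S0ᶜ else Set.univ) := by
    ext ω
    simp only [Set.mem_preimage, Set.mem_pi, Set.mem_univ, true_implies]
    constructor
    · intro h j
      by_cases hj : j = i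
      · subst hj; simpa using h
      · simp [hj]
    · intro h
      have := h i
      simpa using this
  rw [hset, Measure.pi_pi]
  refine Finset.prod_eq_zero (Finset.mem_univ i) ?_
  rw [if_pos rfl, Measure.restrict_apply measurableSet_S0.compl,
    Set.compl_inter_self, measure_empty]

end CovGeo

open CovGeo in
/-- Theorem 8: upper bound on the coverage probability of the random network `g(n, r)`. -/
theorem coverage_upper_bound_random'
    (n : ℕ) (hn : 1 ≤ n) (r : ℝ) (hr : r ∈ Set.Ioo (0:ℝ) (1/2)) :
    ((Measure.pi fun _ : Fin n => volume.restrict S0)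
        {ω : Fin n → Pt | ∀ u ∈ S0, ∃ i, dist (ω i) u ≤ r}).toReal ≤
      (1 - (1 - Real.pi * r ^ 2 / 4) ^ n) ^ 4 *
      (1 - (1 - Real.pi * r ^ 2 / 2) ^ n) ^ (4 * ⌊(1 - 2*r) / (2*r)⌋₊) *
      (1 - (1 - Real.pi * r ^ 2) ^ n) ^ (⌊(1 - 2*r) / (2*r)⌋₊ ^ 2) := by
  classical
  obtain ⟨hr0, hr2⟩ := hr
  set m := ⌊(1 - 2*r) / (2*r)⌋₊ with hm
  set μ : Measure Pt := volume.restrict S0 with hμ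
  -- separation of the grid
  have hM : (0:ℝ) < (m:ℝ) + 1 := by positivity
  have h2r : (0:ℝ) < 2*r := by linarith
  have hsep : 2*r ≤ 1/((m:ℝ)+1) := by
    have hfl : (m:ℝ) ≤ (1 - 2*r)/(2*r) := by
      rw [hm]
      exact Nat.floor_le (div_nonneg (by linarith) h2r.le)
    have h1 : (m:ℝ) + 1 ≤ 1/(2*r) := by
      have : (1 - 2*r)/(2*r) + 1 = 1/(2*r) := by field_simp; ring
      linarith
    rw [le_div_iff₀ hM]
    calc 2*r*((m:ℝ)+1) ≤ 2*r*(1/(2*r)) := by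
          exact mul_le_mul_of_nonneg_left h1 h2r.le
      _ = 1 := by field_simp
  -- the cells
  set C : Fin (m+2) × Fin (m+2) → Set Pt := cell m r with hC
  have hCm : ∀ k, MeasurableSet (C k) := measurableSet_cell m r
  have hKK : ∀ k ∈ (Finset.univ : Finset (Fin (m+2) × Fin (m+2))), ∀ l ∈ Finset.univ,
      k ≠ l → AEDisjoint μ (C k) (C l) := fun k _ l _ hkl =>
    cells_aedisjoint hr0 hsep hkl
  -- coverage event is a.s. contained in the occupancy event
  set covSet := {ω : Fin n → Pt | ∀ u ∈ S0, ∃ i, dist (ω i) u ≤ r} with hcovSet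
  have hcov : covSet ⊆ CovAux.Ev C Finset.univ ∅ n ∪
      ⋃ i, (fun ω : Fin n → Pt => ω i) ⁻¹' S0ᶜ := by
    intro ω hω
    by_cases hall : ∀ i, ω i ∈ S0
    · left
      refine ⟨fun i h => h.elim, ?_⟩
      intro k _
      obtain ⟨i, hi⟩ := hω (gp m k) (gp_mem_S0 k)
      exact ⟨i, mem_closedBall.mpr hi, hall i⟩
    · right
      push_neg at hall
      obtain ⟨i, hi⟩ := hall
      exact Set.mem_iUnion.mpr ⟨i, hi⟩
  have hmono : (Measure.pi fun _ : Fin n => μ) covSet ≤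
      (Measure.pi fun _ : Fin n => μ) (CovAux.Ev C Finset.univ ∅ n) := by
    calc (Measure.pi fun _ : Fin n => μ) covSet
        ≤ (Measure.pi fun _ : Fin n => μ) (CovAux.Ev C Finset.univ ∅ n ∪
            ⋃ i, (fun ω : Fin n → Pt => ω i) ⁻¹' S0ᶜ) := measure_mono hcov
      _ ≤ (Measure.pi fun _ : Fin n => μ) (CovAux.Ev C Finset.univ ∅ n) +
          (Measure.pi fun _ : Fin n => μ) (⋃ i, (fun ω : Fin n → Pt => ω i) ⁻¹' S0ᶜ) :=
          measure_union_le _ _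
      _ = (Measure.pi fun _ : Fin n => μ) (CovAux.Ev C Finset.univ ∅ n) := by
          rw [bad_null n, add_zero]
  have h1 : ((Measure.pi fun _ : Fin n => μ) covSet).toReal ≤
      ((Measure.pi fun _ : Fin n => μ) (CovAux.Ev C Finset.univ ∅ n)).toReal :=
    ENNReal.toReal_mono (measure_ne_top _ _) hmono
  have h2 := CovAux.Ev_measure_le_prod μ hCm Finset.univ hKK n
  -- comparison with the ideal areas
  have hpir : Real.pi * r^2 ≤ 1 := by
    nlinarith [Real.pi_lt_d2, Real.pi_pos]
  have h3 : ∏ k : Fin (m+2) × Fin (m+2), (1 - (1 - (μ (C k)).toReal) ^ n) ≤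
      ∏ k : Fin (m+2) × Fin (m+2),
        (1 - (1 - Real.pi * r^2 * (wb m k.1 * wb m k.2)) ^ n) := by
    refine Finset.prod_le_prod (fun k _ => ?_) (fun k _ => ?_)
    · have hν0 : (0:ℝ) ≤ (μ (C k)).toReal := ENNReal.toReal_nonneg
      have hν1 : (μ (C k)).toReal ≤ 1 := by
        simpa using ENNReal.toReal_mono ENNReal.one_ne_top
          (prob_le_one (μ := μ) (s := C k))
      have : (1 - (μ (C k)).toReal) ^ n ≤ 1 := pow_le_one₀ (by linarith) (by linarith)
      linarith
    · have hw2 : wb m k.1 * wb m k.2 ≤ 1 :=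
        mul_le_one₀ (wb_le_one m k.1) (wb_nonneg m k.2) (wb_le_one m k.2)
      have hw0 : 0 ≤ wb m k.1 * wb m k.2 :=
        mul_nonneg (wb_nonneg m k.1) (wb_nonneg m k.2)
      have ha1 : Real.pi * r^2 * (wb m k.1 * wb m k.2) ≤ 1 := by
        calc Real.pi * r^2 * (wb m k.1 * wb m k.2) ≤ Real.pi * r^2 * 1 :=
              mul_le_mul_of_nonneg_left hw2 (by positivity)
          _ ≤ 1 := by linarith
      have hνa : (μ (C k)).toReal ≤ Real.pi * r^2 * (wb m k.1 * wb m k.2) :=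
        cell_bound hr0.le k
      have hp : (1 - Real.pi * r^2 * (wb m k.1 * wb m k.2)) ^ n ≤
          (1 - (μ (C k)).toReal) ^ n :=
        pow_le_pow_left₀ (by linarith) (by linarith) n
      linarith
  -- grouping the product
  set f : ℝ → ℝ := fun a => 1 - (1 - a) ^ n with hf
  have hgroup : ∏ k : Fin (m+2) × Fin (m+2),
      (1 - (1 - Real.pi * r^2 * (wb m k.1 * wb m k.2)) ^ n) =
      f (Real.pi * r^2/4) ^ 4 * f (Real.pi * r^2/2) ^ (4*m) * f (Real.pi * r^2) ^ (m^2) := by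
    have e2 : Real.pi * r^2 * ((1:ℝ)/2 * (1/2)) = Real.pi * r^2/4 := by ring
    have e3 : Real.pi * r^2 * ((1:ℝ) * (1/2)) = Real.pi * r^2/2 := by ring
    have e4 : Real.pi * r^2 * ((1:ℝ)/2 * 1) = Real.pi * r^2/2 := by ring
    have e5 : Real.pi * r^2 * ((1:ℝ) * 1) = Real.pi * r^2 := by ring
    calc ∏ k : Fin (m+2) × Fin (m+2),
          (1 - (1 - Real.pi * r^2 * (wb m k.1 * wb m k.2)) ^ n)
        = ∏ i : Fin (m+2), ∏ j : Fin (m+2), f (Real.pi * r^2 * (wb m i * wb m j)) :=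
          Fintype.prod_prod_type _
      _ = ∏ i : Fin (m+2),
            (f (Real.pi * r^2 * (wb m i * (1/2))) ^ 2 *
             f (Real.pi * r^2 * (wb m i * 1)) ^ m) := by
          refine Finset.prod_congr rfl fun i _ => ?_
          exact prod_w m (fun t => f (Real.pi * r^2 * (wb m i * t)))
      _ = (∏ i : Fin (m+2), f (Real.pi * r^2 * (wb m i * (1/2)))) ^ 2 *
          (∏ i : Fin (m+2), f (Real.pi * r^2 * (wb m i * 1))) ^ m := by
          rw [Finset.prod_mul_distrib, Finset.prod_pow, Finset.prod_pow]
      _ = (f (Real.pi * r^2 * ((1:ℝ)/2 * (1/2))) ^ 2 *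
           f (Real.pi * r^2 * ((1:ℝ) * (1/2))) ^ m) ^ 2 *
          (f (Real.pi * r^2 * ((1:ℝ)/2 * 1)) ^ 2 *
           f (Real.pi * r^2 * ((1:ℝ) * 1)) ^ m) ^ m := by
          rw [prod_w m (fun t => f (Real.pi * r^2 * (t * (1/2)))),
            prod_w m (fun t => f (Real.pi * r^2 * (t * 1)))]
      _ = f (Real.pi * r^2/4) ^ 4 * f (Real.pi * r^2/2) ^ (4*m) *
            f (Real.pi * r^2) ^ (m^2) := by
          rw [e2, e3, e4, e5]
          exact group_pow _ _ _ m
  calc ((Measure.pi fun _ : Fin n => μ) covSet).toReal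
      ≤ ∏ k : Fin (m+2) × Fin (m+2), (1 - (1 - (μ (C k)).toReal) ^ n) :=
        le_trans h1 h2
    _ ≤ ∏ k : Fin (m+2) × Fin (m+2),
          (1 - (1 - Real.pi * r^2 * (wb m k.1 * wb m k.2)) ^ n) := h3
    _ = _ := by rw [hgroup]

/-- Theorem 8: upper bound on the coverage probability of the random network `g(n, r)`. -/
theorem coverage_upper_bound_random
    (n : ℕ) (hn : 1 ≤ n) (r : ℝ) (hr : r ∈ Set.Ioo (0:ℝ) (1/2)) :
    pcovRand n r ≤
      (1 - (1 - Real.pi * r ^ 2 / 4) ^ n) ^ 4 *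
      (1 - (1 - Real.pi * r ^ 2 / 2) ^ n) ^ (4 * ⌊(1 - 2*r) / (2*r)⌋₊) *
      (1 - (1 - Real.pi * r ^ 2) ^ n) ^ (⌊(1 - 2*r) / (2*r)⌋₊ ^ 2) := by
  have h := coverage_upper_bound_random' n hn r hr
  simpa [pcovRand, μunif] using h

end
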